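/- Let D ≥ 1 be an integer, μ ∈ ℝ^D a nonzero vector, γ ∈ ℝ, d > 0 a real number, and h ∈ ℝ with 1 + γ(2h−1) ≠ 0. Let Z_1, …, Z_D be independent real random variables where Z_k has law gaussianReal((1 + γ(2h−1))·μ_k, 1 + γ²/d). Let w = sign(1 + γ(2h−1))·μ/‖μ‖₂. Then the probability that ∑_{k=1}^D w_k·Z_k ≥ 0 equals Φ(√(d/(d+γ²)) · |1 + γ(2h−1)| · ‖μ‖₂). This is the expected accuracy of the optimal linear classifier on positive-class nodes of CSBM(μ, −μ, d, h) under a single-layer GCN (Corollary 1). -/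

import Mathlib

open MeasureTheory ProbabilityTheory

/-- The standard normal CDF `Φ(x) = ∫_{t ≤ x} (2π)^{-1/2} exp(-t²/2) dt`. -/
noncomputable def stdNormalCDF (x : ℝ) : ℝ :=
  ∫ t in Set.Iic x, (Real.sqrt (2 * Real.pi))⁻¹ * Real.exp (-t ^ 2 / 2)

namespace CsbmAux
open Real
open scoped ENNReal NNReal

lemma coe_pos_of_ne_zero {v : ℝ≥0} (h : v ≠ 0) : (0:ℝ) < v := by
  exact_mod_cast zero_lt_iff.mpr h

lemma gaussian_conv_integrand_eq (m₁ m₂ z : ℝ) {v₁ v₂ : ℝ≥0} (h₁ : v₁ ≠ 0) (h₂ : v₂ ≠ 0) :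
    (fun x => gaussianPDFReal m₁ v₁ x * gaussianPDFReal (m₂ + x) v₂ z)
      = fun x => ((Real.sqrt (2*π*v₁))⁻¹ * (Real.sqrt (2*π*v₂))⁻¹
          * Real.exp (-((z - m₁ - m₂)^2 / (2*((v₁:ℝ) + v₂)))))
        * Real.exp (-(((v₁:ℝ) + v₂)/(2*(v₁:ℝ)*v₂)) *
            (x - ((v₂:ℝ)*m₁ + (v₁:ℝ)*(z - m₂))/((v₁:ℝ) + v₂))^2) := by
  have hv₁ : (0:ℝ) < v₁ := coe_pos_of_ne_zero h₁
  have hv₂ : (0:ℝ) < v₂ := coe_pos_of_ne_zero h₂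
  have hsum : (0:ℝ) < (v₁:ℝ) + v₂ := by linarith
  funext x
  simp only [gaussianPDFReal]
  have hE : rexp (-(x - m₁)^2 / (2*(v₁:ℝ))) * rexp (-(z - (m₂ + x))^2 / (2*(v₂:ℝ)))
      = rexp (-((z - m₁ - m₂)^2 / (2*((v₁:ℝ) + v₂))))
        * rexp (-(((v₁:ℝ) + v₂)/(2*(v₁:ℝ)*v₂)) *
            (x - ((v₂:ℝ)*m₁ + (v₁:ℝ)*(z - m₂))/((v₁:ℝ) + v₂))^2) := by
    rw [← Real.exp_add, ← Real.exp_add, Real.exp_eq_exp]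
    field_simp
    ring
  calc (Real.sqrt (2*π*v₁))⁻¹ * rexp (-(x - m₁)^2 / (2*(v₁:ℝ)))
        * ((Real.sqrt (2*π*v₂))⁻¹ * rexp (-(z - (m₂ + x))^2 / (2*(v₂:ℝ))))
      = (Real.sqrt (2*π*v₁))⁻¹ * (Real.sqrt (2*π*v₂))⁻¹
        * (rexp (-(x - m₁)^2 / (2*(v₁:ℝ))) * rexp (-(z - (m₂ + x))^2 / (2*(v₂:ℝ)))) := by ring
    _ = _ := by rw [hE]; ring

end CsbmAux

namespace CsbmAux
open scoped ENNReal NNReal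
open MeasureTheory ProbabilityTheory Real

lemma integrable_conv_integrand (m₁ m₂ z : ℝ) {v₁ v₂ : ℝ≥0} (h₁ : v₁ ≠ 0) (h₂ : v₂ ≠ 0) :
    Integrable (fun x => gaussianPDFReal m₁ v₁ x * gaussianPDFReal (m₂ + x) v₂ z) := by
  rw [gaussian_conv_integrand_eq m₁ m₂ z h₁ h₂]
  have hv₁ : (0:ℝ) < v₁ := coe_pos_of_ne_zero h₁
  have hv₂ : (0:ℝ) < v₂ := coe_pos_of_ne_zero h₂
  have hA : (0:ℝ) < ((v₁:ℝ) + v₂)/(2*(v₁:ℝ)*v₂) := by positivity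
  exact ((integrable_exp_neg_mul_sq hA).comp_sub_right _).const_mul _

lemma gaussianPDFReal_conv (m₁ m₂ z : ℝ) {v₁ v₂ : ℝ≥0} (h₁ : v₁ ≠ 0) (h₂ : v₂ ≠ 0) :
    ∫ x, gaussianPDFReal m₁ v₁ x * gaussianPDFReal (m₂ + x) v₂ z
      = gaussianPDFReal (m₁ + m₂) (v₁ + v₂) z := by
  have hv₁ : (0:ℝ) < v₁ := coe_pos_of_ne_zero h₁
  have hv₂ : (0:ℝ) < v₂ := coe_pos_of_ne_zero h₂
  have hsum : (0:ℝ) < (v₁:ℝ) + v₂ := by linarith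
  have hA : (0:ℝ) < ((v₁:ℝ) + v₂)/(2*(v₁:ℝ)*v₂) := by positivity
  rw [gaussian_conv_integrand_eq m₁ m₂ z h₁ h₂]
  rw [MeasureTheory.integral_const_mul]
  rw [integral_sub_right_eq_self
    (fun x => rexp (-(((v₁:ℝ) + v₂)/(2*(v₁:ℝ)*v₂)) * x^2)) _]
  rw [integral_gaussian]
  have hπA : π / (((v₁:ℝ) + v₂)/(2*(v₁:ℝ)*v₂))
      = (2*π*(v₁:ℝ)) * (2*π*(v₂:ℝ)) / (2*π*((v₁:ℝ)+(v₂:ℝ))) := by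
    field_simp
  have hsq : Real.sqrt ((2*π*(v₁:ℝ)) * (2*π*(v₂:ℝ)) / (2*π*((v₁:ℝ)+(v₂:ℝ))))
      = Real.sqrt (2*π*(v₁:ℝ)) * Real.sqrt (2*π*(v₂:ℝ)) / Real.sqrt (2*π*((v₁:ℝ)+(v₂:ℝ))) := by
    rw [Real.sqrt_div (by positivity), Real.sqrt_mul (by positivity)]
  rw [hπA, hsq]
  simp only [gaussianPDFReal]
  have h1 : Real.sqrt (2*π*(v₁:ℝ)) ≠ 0 := by positivity
  have h2 : Real.sqrt (2*π*(v₂:ℝ)) ≠ 0 := by positivity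
  have h3 : Real.sqrt (2*π*((v₁:ℝ)+(v₂:ℝ))) ≠ 0 := by positivity
  have hcoe : ((v₁ + v₂ : ℝ≥0) : ℝ) = (v₁:ℝ) + v₂ := by push_cast; ring
  rw [hcoe]
  have hexp : z - (m₁ + m₂) = z - m₁ - m₂ := by ring
  rw [hexp]
  field_simp

lemma measurable_pdf2 (m₂ : ℝ) (v₂ : ℝ≥0) :
    Measurable (fun p : ℝ × ℝ => gaussianPDF (m₂ + p.1) v₂ p.2) := by
  unfold gaussianPDF gaussianPDFReal
  exact (by fun_prop : Measurable (fun p : ℝ × ℝ =>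
    (Real.sqrt (2*π*v₂))⁻¹ * rexp (-(p.2 - (m₂ + p.1))^2 / (2*v₂)))).ennreal_ofReal

lemma lintegral_conv (m₁ m₂ z : ℝ) {v₁ v₂ : ℝ≥0} (h₁ : v₁ ≠ 0) (h₂ : v₂ ≠ 0) :
    ∫⁻ x, gaussianPDF m₁ v₁ x * gaussianPDF (m₂ + x) v₂ z
      = gaussianPDF (m₁ + m₂) (v₁ + v₂) z := by
  have heq : ∀ x, gaussianPDF m₁ v₁ x * gaussianPDF (m₂ + x) v₂ z
      = ENNReal.ofReal (gaussianPDFReal m₁ v₁ x * gaussianPDFReal (m₂ + x) v₂ z) := fun x =>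
    (ENNReal.ofReal_mul (gaussianPDFReal_nonneg _ _ _)).symm
  simp_rw [heq]
  rw [← ofReal_integral_eq_lintegral_ofReal (integrable_conv_integrand m₁ m₂ z h₁ h₂)
    (ae_of_all _ fun x => mul_nonneg (gaussianPDFReal_nonneg _ _ _) (gaussianPDFReal_nonneg _ _ _))]
  rw [gaussianPDFReal_conv m₁ m₂ z h₁ h₂]
  rfl

lemma gaussianReal_prod_add (m₁ m₂ : ℝ) (v₁ v₂ : ℝ≥0) :
    Measure.map (fun p : ℝ × ℝ => p.1 + p.2)
        ((gaussianReal m₁ v₁).prod (gaussianReal m₂ v₂))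
      = gaussianReal (m₁ + m₂) (v₁ + v₂) := by
  by_cases h₁ : v₁ = 0
  · subst h₁
    rw [gaussianReal_zero_var, Measure.dirac_prod,
      Measure.map_map measurable_add (measurable_prodMk_left)]
    have : ((fun p : ℝ × ℝ => p.1 + p.2) ∘ fun y => (m₁, y)) = fun y => m₁ + y := rfl
    rw [this, gaussianReal_map_const_add, add_comm m₂ m₁, zero_add]
  by_cases h₂ : v₂ = 0
  · subst h₂
    rw [gaussianReal_zero_var, Measure.prod_dirac,
      Measure.map_map measurable_add (measurable_prodMk_right)]
    have : ((fun p : ℝ × ℝ => p.1 + p.2) ∘ fun x => (x, m₂)) = fun x => x + m₂ := rfl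
    rw [this, gaussianReal_map_add_const, add_zero]
  -- main case
  have hsum : v₁ + v₂ ≠ 0 := by simp [h₁]
  ext s hs
  rw [Measure.map_apply measurable_add hs, Measure.prod_apply (measurable_add hs)]
  have step1 : ∀ x : ℝ, (gaussianReal m₂ v₂) (Prod.mk x ⁻¹' ((fun p : ℝ × ℝ => p.1 + p.2) ⁻¹' s))
      = ∫⁻ z in s, gaussianPDF (m₂ + x) v₂ z := by
    intro x
    have hpre : Prod.mk x ⁻¹' ((fun p : ℝ × ℝ => p.1 + p.2) ⁻¹' s) = (fun y => x + y) ⁻¹' s := rfl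
    rw [hpre, ← Measure.map_apply (measurable_const_add x) hs, gaussianReal_map_const_add,
      gaussianReal_of_var_ne_zero _ h₂, withDensity_apply _ hs]
  simp_rw [step1]
  have hmeasf : Measurable (fun x : ℝ => ∫⁻ z in s, gaussianPDF (m₂ + x) v₂ z) :=
    (measurable_pdf2 m₂ v₂).lintegral_prod_right'
  rw [gaussianReal_of_var_ne_zero _ h₁,
    lintegral_withDensity_eq_lintegral_mul _ (measurable_gaussianPDF _ _) hmeasf]
  have hpull : ∀ x : ℝ, (gaussianPDF m₁ v₁ * fun x => ∫⁻ z in s, gaussianPDF (m₂ + x) v₂ z) x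
      = ∫⁻ z in s, gaussianPDF m₁ v₁ x * gaussianPDF (m₂ + x) v₂ z := by
    intro x
    simp only [Pi.mul_apply]
    rw [lintegral_const_mul _ (measurable_gaussianPDF (m₂ + x) v₂)]
  simp_rw [hpull]
  rw [lintegral_lintegral_swap]
  · have : ∀ z : ℝ, ∫⁻ x, gaussianPDF m₁ v₁ x * gaussianPDF (m₂ + x) v₂ z
        = gaussianPDF (m₁ + m₂) (v₁ + v₂) z := fun z => lintegral_conv m₁ m₂ z h₁ h₂
    simp_rw [this]
    rw [gaussianReal_of_var_ne_zero _ hsum, withDensity_apply _ hs]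
  · exact ((measurable_gaussianPDF m₁ v₁).comp measurable_fst |>.mul
      (measurable_pdf2 m₂ v₂)).aemeasurable

variable {Ω : Type*} [MeasurableSpace Ω] {P : Measure Ω} [IsProbabilityMeasure P]

lemma gaussianReal_add_indep {X Y : Ω → ℝ} (hX : Measurable X) (hY : Measurable Y)
    (hind : IndepFun X Y P) {m₁ m₂ : ℝ} {v₁ v₂ : ℝ≥0}
    (hXl : P.map X = gaussianReal m₁ v₁) (hYl : P.map Y = gaussianReal m₂ v₂) :
    P.map (X + Y) = gaussianReal (m₁ + m₂) (v₁ + v₂) := by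
  have h := (indepFun_iff_map_prod_eq_prod_map_map hX.aemeasurable hY.aemeasurable).mp hind
  have hcomp : X + Y = (fun p : ℝ × ℝ => p.1 + p.2) ∘ fun ω => (X ω, Y ω) := rfl
  rw [hcomp, ← Measure.map_map measurable_add (hX.prodMk hY), h, hXl, hYl,
    gaussianReal_prod_add]

lemma gaussianReal_finset_sum {ι : Type*} (X : ι → Ω → ℝ) (hmeas : ∀ i, Measurable (X i))
    (hindep : iIndepFun X P) (m : ι → ℝ) (v : ι → ℝ≥0)
    (hlaw : ∀ i, P.map (X i) = gaussianReal (m i) (v i)) (s : Finset ι) :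
    P.map (∑ i ∈ s, X i) = gaussianReal (∑ i ∈ s, m i) (∑ i ∈ s, v i) := by
  classical
  induction s using Finset.cons_induction with
  | empty =>
    simp only [Finset.sum_empty]
    rw [show (0 : Ω → ℝ) = fun _ => (0:ℝ) from rfl, Measure.map_const, measure_univ, one_smul,
      ← gaussianReal_zero_var]
  | cons i s his ih =>
    rw [Finset.sum_cons, Finset.sum_cons, Finset.sum_cons]
    have hsum_meas : Measurable (∑ j ∈ s, X j) := by
      have : (∑ j ∈ s, X j) = fun ω => ∑ j ∈ s, X j ω := by
        funext ω; simp [Finset.sum_apply]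
      rw [this]; exact Finset.measurable_sum s (fun j _ => hmeas j)
    exact gaussianReal_add_indep (hmeas i) hsum_meas
      ((hindep.indepFun_finsetSum_of_notMem hmeas his).symm) (hlaw i) ih

lemma gaussianReal_Iic_toReal (y : ℝ) :
    ((gaussianReal 0 1) (Set.Iic y)).toReal = stdNormalCDF y := by
  rw [gaussianReal_of_var_ne_zero _ one_ne_zero, withDensity_apply _ measurableSet_Iic,
    gaussianPDF_def, ← ofReal_integral_eq_lintegral_ofReal ((integrable_gaussianPDFReal 0 1).restrict)
      (ae_of_all _ (fun x => gaussianPDFReal_nonneg 0 1 x)),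
    ENNReal.toReal_ofReal (integral_nonneg (fun x => gaussianPDFReal_nonneg 0 1 x))]
  unfold stdNormalCDF
  congr 1
  funext x
  simp [gaussianPDFReal]

lemma gaussianReal_Ici_toReal (M : ℝ) {v : ℝ≥0} (hv : v ≠ 0) :
    ((gaussianReal M v) (Set.Ici 0)).toReal = stdNormalCDF (M / Real.sqrt v) := by
  have hσ : (0:ℝ) < Real.sqrt v := Real.sqrt_pos.mpr (coe_pos_of_ne_zero hv)
  have h1 : (gaussianReal 0 1).map (fun x => Real.sqrt v * x) = gaussianReal 0 v := by
    rw [show (fun x => Real.sqrt v * x) = (Real.sqrt v * ·) from rfl,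
      gaussianReal_map_const_mul]
    congr 1
    · ring
    · ext
      simp [Real.sq_sqrt v.coe_nonneg]
  have h2 : (gaussianReal 0 1).map (fun x => Real.sqrt v * x + M) = gaussianReal M v := by
    have := Measure.map_map (measurable_add_const M)
      (show Measurable (fun x : ℝ => Real.sqrt v * x) by fun_prop) (μ := gaussianReal 0 1)
    rw [show ((fun x : ℝ => x + M) ∘ fun x : ℝ => Real.sqrt v * x)
      = fun x => Real.sqrt v * x + M from rfl] at this
    rw [← this, h1, gaussianReal_map_add_const, zero_add]
  have hneg : (gaussianReal 0 1).map (fun x : ℝ => -x) = gaussianReal 0 1 := by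
    rw [show (fun x : ℝ => -x) = ((-1 : ℝ) * ·) by funext x; ring, gaussianReal_map_const_mul]
    congr 1
    · ring
    · ext; norm_num
  have hpre : (fun x => Real.sqrt v * x + M) ⁻¹' Set.Ici 0 = Set.Ici (-(M / Real.sqrt v)) := by
    ext x
    simp only [Set.mem_preimage, Set.mem_Ici]
    rw [← neg_div, div_le_iff₀ hσ]
    constructor <;> intro hx <;> nlinarith
  have hsym : (gaussianReal 0 1) (Set.Ici (-(M / Real.sqrt v)))
      = (gaussianReal 0 1) (Set.Iic (M / Real.sqrt v)) := by
    conv_rhs => rw [← hneg]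
    rw [Measure.map_apply measurable_neg measurableSet_Iic]
    congr 1
    ext x
    simp only [Set.mem_Ici, Set.mem_preimage, Set.mem_Iic, neg_le]
  rw [← h2, Measure.map_apply (by fun_prop) measurableSet_Ici, hpre, hsym,
    gaussianReal_Iic_toReal]

end CsbmAux

open scoped ENNReal NNReal

/-- **Corollary 1 (expected accuracy of the optimal linear classifier).**
If `Z k ~ gaussianReal ((1 + γ(2h-1)) μ k) (1 + γ²/d)` independently, and
`w = sign(1 + γ(2h-1)) · μ / ‖μ‖`, then
`P(∑ k, w k * Z k ≥ 0) = Φ(√(d/(d+γ²)) · |1 + γ(2h-1)| · ‖μ‖)`. -/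
theorem csbm_gcn_optimal_classifier_accuracy
    {Ω : Type*} [MeasurableSpace Ω] (P : Measure Ω) [IsProbabilityMeasure P]
    (D : ℕ) (hD : 1 ≤ D) (μ : EuclideanSpace ℝ (Fin D)) (hμ : μ ≠ 0)
    (γ d h : ℝ) (hd : 0 < d) (hγh : 1 + γ * (2 * h - 1) ≠ 0)
    (Z : Fin D → Ω → ℝ) (hmeas : ∀ k, Measurable (Z k))
    (hindep : iIndepFun Z P)
    (hlaw : ∀ k, Measure.map (Z k) P =
      gaussianReal ((1 + γ * (2 * h - 1)) * μ k) (Real.toNNReal (1 + γ ^ 2 / d))) :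
    (P {ω | 0 ≤ ∑ k, (Real.sign (1 + γ * (2 * h - 1)) * (μ k / ‖μ‖)) * Z k ω}).toReal =
      stdNormalCDF (Real.sqrt (d / (d + γ ^ 2)) * |1 + γ * (2 * h - 1)| * ‖μ‖) := by
  classical
  set α : ℝ := 1 + γ * (2 * h - 1) with hα
  set sgn : ℝ := Real.sign α with hsgn
  set c : Fin D → ℝ := fun k => sgn * (μ k / ‖μ‖) with hc
  set v : ℝ≥0 := Real.toNNReal (1 + γ ^ 2 / d) with hv
  have hvpos : (0:ℝ) < 1 + γ ^ 2 / d := by positivity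
  have hvcoe : (v:ℝ) = 1 + γ ^ 2 / d := Real.coe_toNNReal _ hvpos.le
  have hvne : v ≠ 0 := by
    intro h0
    rw [h0] at hvcoe
    simp at hvcoe
    linarith
  have hμnorm : (0:ℝ) < ‖μ‖ := by
    simpa using norm_pos_iff.mpr hμ
  have hsq : ∑ k, (μ k) ^ 2 = ‖μ‖ ^ 2 := by
    rw [EuclideanSpace.norm_eq, Real.sq_sqrt (by positivity)]
    simp [Real.norm_eq_abs, sq_abs]
  have hsgnα : sgn * α = |α| := by
    rcases lt_or_gt_of_ne hγh with hneg | hpos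
    · rw [hsgn, Real.sign_of_neg hneg, abs_of_neg hneg]; ring
    · rw [hsgn, Real.sign_of_pos hpos, abs_of_pos hpos]; ring
  have hsgn_sq : sgn ^ 2 = 1 := by
    rcases lt_or_gt_of_ne hγh with hneg | hpos
    · rw [hsgn, Real.sign_of_neg hneg]; norm_num
    · rw [hsgn, Real.sign_of_pos hpos]; norm_num
  set X : Fin D → Ω → ℝ := fun k ω => c k * Z k ω with hX
  have hXmeas : ∀ k, Measurable (X k) := fun k => (hmeas k).const_mul _
  have hXindep : iIndepFun X P :=
    hindep.comp (fun k x => c k * x) (fun k => by fun_prop)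
  have hXlaw : ∀ k, P.map (X k) =
      gaussianReal (c k * (α * μ k)) (.mk ((c k) ^ 2) (sq_nonneg _) * v) := by
    intro k
    have hck : X k = (fun x => c k * x) ∘ Z k := rfl
    rw [hck, ← Measure.map_map (by fun_prop) (hmeas k), hlaw k]
    exact gaussianReal_map_const_mul (c k)
  have hmap := CsbmAux.gaussianReal_finset_sum X hXmeas hXindep _ _ hXlaw Finset.univ
  have hmean : ∑ k, c k * (α * μ k) = |α| * ‖μ‖ := by
    have hterm : ∀ k, c k * (α * μ k) = (sgn * α / ‖μ‖) * (μ k) ^ 2 := by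
      intro k; rw [hc]; ring
    rw [Finset.sum_congr rfl (fun k _ => hterm k), ← Finset.mul_sum, hsq, hsgnα]
    field_simp
  have hcsum : ∑ k, (c k) ^ 2 = 1 := by
    have hterm : ∀ k, (c k) ^ 2 = (sgn ^ 2 / ‖μ‖ ^ 2) * (μ k) ^ 2 := by
      intro k; rw [hc]; ring
    rw [Finset.sum_congr rfl (fun k _ => hterm k), ← Finset.mul_sum, hsq, hsgn_sq]
    field_simp
  have hvar : (∑ k : Fin D, (.mk ((c k) ^ 2) (sq_nonneg _) * v : ℝ≥0)) = v := by
    rw [← NNReal.coe_inj, NNReal.coe_sum]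
    simp only [NNReal.coe_mul, NNReal.coe_mk]
    rw [← Finset.sum_mul, hcsum, one_mul]
  rw [hmean, hvar] at hmap
  have hSmeas : Measurable (∑ k, X k) := by
    have hfe : (∑ k, X k) = fun ω => ∑ k, X k ω := by
      funext ω; simp [Finset.sum_apply]
    rw [hfe]; exact Finset.measurable_sum _ (fun k _ => hXmeas k)
  have hset : {ω | 0 ≤ ∑ k, (Real.sign α * (μ k / ‖μ‖)) * Z k ω}
      = (∑ k, X k) ⁻¹' Set.Ici 0 := by
    ext ω
    simp only [Set.mem_setOf_eq, Set.mem_preimage, Set.mem_Ici, Finset.sum_apply]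
    rfl
  rw [hset, ← Measure.map_apply hSmeas measurableSet_Ici, hmap,
    CsbmAux.gaussianReal_Ici_toReal _ hvne]
  congr 1
  rw [hvcoe]
  have h1 : 1 + γ ^ 2 / d = (d + γ ^ 2) / d := by field_simp
  have hs2 : (0:ℝ) < Real.sqrt ((d + γ ^ 2) / d) := Real.sqrt_pos.mpr (by positivity)
  have hprod : Real.sqrt (d / (d + γ ^ 2)) * Real.sqrt ((d + γ ^ 2) / d) = 1 := by
    rw [← Real.sqrt_mul (by positivity), show (d / (d + γ ^ 2)) * ((d + γ ^ 2) / d) = 1 by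
      field_simp, Real.sqrt_one]
  rw [h1, eq_comm, eq_div_iff hs2.ne']
  calc Real.sqrt (d / (d + γ ^ 2)) * |α| * ‖μ‖ * Real.sqrt ((d + γ ^ 2) / d)
      = (|α| * ‖μ‖) * (Real.sqrt (d / (d + γ ^ 2)) * Real.sqrt ((d + γ ^ 2) / d)) := by ring
    _ = |α| * ‖μ‖ := by rw [hprod, mul_one]
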